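/- If p and 2p-1 are both odd primes and n = 2(2p-1), then φ(n) = φ(n+2). -/
import Mathlib


theorem stmt_0 (p n : ℕ) (hp : p.Prime) (hpo : Odd p)
    (hq : Nat.Prime (2 * p - 1)) (hqo : Odd (2 * p - 1))
    (hn : n = 2 * (2 * p - 1)) :
    Nat.totient n = Nat.totient (n + 2) := by
  have hp1 : 1 ≤ p := hp.one_lt.le
  have h1 : n + 2 = 4 * p := by omega
  subst hn
  rw [h1]
  have hc1 : Nat.Coprime 2 (2 * p - 1) := by
    simpa [Nat.coprime_two_left] using hqo
  have hc2 : Nat.Coprime 4 p := by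
    have : Nat.Coprime 2 p := by simpa [Nat.coprime_two_left] using hpo
    show Nat.Coprime (2 * 2) p
    exact Nat.Coprime.mul this this
  rw [Nat.totient_mul hc1, Nat.totient_mul hc2, Nat.totient_prime hq, Nat.totient_prime hp]
  have h4 : Nat.totient 4 = 2 := by decide
  rw [h4]
  simp [Nat.totient_two]
  omega
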